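/- arXiv:2110.09112 — 3 statements merged into one kernel-verified Lean document; each statement's English description precedes it below -/
import Mathlib

section
/- Let p ∈ ℚ[t] be monic of degree m ≥ 1 with companion matrix C ∈ ℚ^{m×m}, and let q = c·p ∈ ℤ[t], where c ∈ ℤ∖{0} is chosen so that q has coprime coefficients. Then the map h : ℤ^m[C] → ℤ[t]/(q) sending Σ_{i=0}^{ℓ} b_i C^i e₁ (with b_i ∈ ℤ, e₁ the first standard basis vector of ℚ^m) to the class of Σ_{i=0}^{ℓ} b_i t^i is a well-defined isomorphism of additive groups, and it satisfies h(C·v) = t·h(v) for every v ∈ ℤ^m[C]. -/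
open Matrix Polynomial

/-- `ℤ^m[M] = ⋃_{k≥1} (ℤ^m + Mℤ^m + ⋯ + M^{k-1}ℤ^m)`, the additive subgroup of `ℚ^m`
generated by all vectors `M^j z` with `z ∈ ℤ^m`. -/
def intSpan (m : ℕ) (M : Matrix (Fin m) (Fin m) ℚ) : AddSubgroup (Fin m → ℚ) :=
  AddSubgroup.closure {x | ∃ (j : ℕ) (z : Fin m → ℤ), x = (M ^ j) *ᵥ fun i => (z i : ℚ)}

/-- The companion matrix of a monic polynomial `p` of degree `m`:
`C e_j = e_{j+1}` for `1 ≤ j < m` and `C e_m = -(a₀ e₁ + ⋯ + a_{m-1} e_m)`. -/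
def companion (m : ℕ) (p : Polynomial ℚ) : Matrix (Fin m) (Fin m) ℚ :=
  Matrix.of fun i j =>
    if (j : ℕ) + 1 = m then -p.coeff i else if (i : ℕ) = (j : ℕ) + 1 then 1 else 0

section
variable (m : ℕ) (hm : 1 ≤ m) (p : Polynomial ℚ)

lemma pow_mulVec_e1 : ∀ (i : ℕ) (h : i < m),
    (companion m p)^i *ᵥ Pi.single (⟨0, hm⟩ : Fin m) (1:ℚ) = Pi.single (⟨i, h⟩ : Fin m) 1 := by
  intro i
  induction i with
  | zero =>
    intro h
    funext j
    simp [Matrix.one_apply, Pi.single_apply, Fin.ext_iff, eq_comm]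
  | succ i ih =>
    intro h
    rw [pow_succ', ← Matrix.mulVec_mulVec, ih (Nat.lt_of_succ_lt h)]
    funext j
    simp only [Matrix.mulVec_single_one, Matrix.col_apply, companion, Matrix.of_apply, mul_one]
    have : ¬ (i + 1 = m) := Nat.ne_of_lt h
    rw [if_neg this, Pi.single_apply]
    simp [Fin.ext_iff, eq_comm]
end

lemma aeval_p_mulVec_e1 (m : ℕ) (hm : 1 ≤ m) (p : Polynomial ℚ) (hp : p.Monic)
    (hpd : p.natDegree = m) :
    (Polynomial.aeval (companion m p) p) *ᵥ Pi.single (⟨0, hm⟩ : Fin m) (1:ℚ) = 0 := by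
  have hlast : (companion m p) *ᵥ Pi.single (⟨m-1, Nat.sub_lt hm one_pos⟩ : Fin m) (1:ℚ)
      = fun i : Fin m => -p.coeff i := by
    funext i
    simp only [Matrix.mulVec_single_one, Matrix.col_apply, companion, Matrix.of_apply, mul_one]
    rw [if_pos (Nat.sub_add_cancel hm)]
  have hCm : (companion m p)^m *ᵥ Pi.single (⟨0, hm⟩ : Fin m) (1:ℚ)
      = fun i : Fin m => -p.coeff i := by
    have hpow : (companion m p)^m = companion m p * (companion m p)^(m-1) := by
      rw [← pow_succ', Nat.sub_add_cancel hm]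
    rw [hpow, ← Matrix.mulVec_mulVec, pow_mulVec_e1 m hm p (m-1) (Nat.sub_lt hm one_pos), hlast]
  rw [Polynomial.aeval_eq_sum_range, hpd, Finset.sum_range_succ]
  rw [Matrix.add_mulVec, Matrix.smul_mulVec, hCm]
  have hcm : p.coeff m = 1 := by rw [← hpd]; exact hp.coeff_natDegree
  rw [hcm, one_smul]
  have hsum : (∑ i ∈ Finset.range m, p.coeff i • (companion m p)^i) *ᵥ
      Pi.single (⟨0, hm⟩ : Fin m) (1:ℚ) = fun i : Fin m => p.coeff i := by
    have hmapsum := _root_.map_sum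
      (Matrix.mulVec.addMonoidHomLeft (Pi.single (⟨0, hm⟩ : Fin m) (1:ℚ)))
      (fun i => p.coeff i • (companion m p)^i) (Finset.range m)
    simp only [Matrix.mulVec.addMonoidHomLeft] at hmapsum
    rw [show (∑ i ∈ Finset.range m, p.coeff i • (companion m p)^i) *ᵥ
        Pi.single (⟨0, hm⟩ : Fin m) (1:ℚ)
        = ∑ i ∈ Finset.range m, (p.coeff i • (companion m p)^i) *ᵥ
          Pi.single (⟨0, hm⟩ : Fin m) (1:ℚ) from hmapsum, Finset.sum_range]
    funext j
    simp only [Finset.sum_apply, Matrix.smul_mulVec]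
    rw [Finset.sum_congr rfl (fun i _ => by
      rw [pow_mulVec_e1 m hm p i i.isLt])]
    simp [Pi.single_apply]
  rw [hsum]
  funext i
  simp

lemma aeval_p_eq_zero (m : ℕ) (hm : 1 ≤ m) (p : Polynomial ℚ) (hp : p.Monic)
    (hpd : p.natDegree = m) : Polynomial.aeval (companion m p) p = 0 := by
  have key : ∀ j : Fin m, (Polynomial.aeval (companion m p) p) *ᵥ Pi.single j (1:ℚ) = 0 := by
    intro j
    have hj : (j : ℕ) < m := j.isLt
    have h1 : Pi.single j (1:ℚ) = (companion m p)^(j:ℕ) *ᵥ Pi.single (⟨0, hm⟩ : Fin m) (1:ℚ) := by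
      rw [pow_mulVec_e1 m hm p j hj]
    rw [h1, Matrix.mulVec_mulVec]
    have comm : Polynomial.aeval (companion m p) p * (companion m p)^(j:ℕ)
        = (companion m p)^(j:ℕ) * Polynomial.aeval (companion m p) p := by
      have h2 : (companion m p)^(j:ℕ)
          = Polynomial.aeval (companion m p) ((Polynomial.X : Polynomial ℚ)^(j:ℕ)) := by
        simp
      rw [h2, ← _root_.map_mul, ← _root_.map_mul, mul_comm]
    rw [comm, ← Matrix.mulVec_mulVec, aeval_p_mulVec_e1 m hm p hp hpd, Matrix.mulVec_zero]
  ext i j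
  have := congrFun (key j) i
  simpa using this

noncomputable def phi (m : ℕ) (hm : 1 ≤ m) (p : Polynomial ℚ) :
    Polynomial ℤ →ₗ[ℤ] (Fin m → ℚ) where
  toFun f := (Polynomial.aeval (companion m p) f) *ᵥ Pi.single (⟨0, hm⟩ : Fin m) (1:ℚ)
  map_add' f g := by
    rw [_root_.map_add, Matrix.add_mulVec]
  map_smul' a f := by
    simp only [RingHom.id_apply]
    rw [_root_.map_smul, Matrix.smul_mulVec]

lemma phi_apply (m : ℕ) (hm : 1 ≤ m) (p : Polynomial ℚ) (f : Polynomial ℤ) :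
    phi m hm p f = (Polynomial.aeval (companion m p) f) *ᵥ Pi.single (⟨0, hm⟩ : Fin m) (1:ℚ) :=
  rfl

lemma phi_eq_zero_of_dvd (m : ℕ) (hm : 1 ≤ m) (p : Polynomial ℚ) (hp : p.Monic)
    (hpd : p.natDegree = m) (q : Polynomial ℤ) (c : ℤ)
    (hqc : q.map (Int.castRingHom ℚ) = Polynomial.C (c : ℚ) * p)
    (f : Polynomial ℤ) (hf : q ∣ f) : phi m hm p f = 0 := by
  obtain ⟨g, rfl⟩ := hf
  rw [phi_apply, show (Polynomial.aeval (companion m p)) (q * g)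
    = Polynomial.aeval (companion m p) q * Polynomial.aeval (companion m p) g from
    _root_.map_mul _ _ _]
  have hq0 : Polynomial.aeval (companion m p) q = 0 := by
    rw [show Polynomial.aeval (companion m p) q
        = Polynomial.aeval (companion m p) (q.map (Int.castRingHom ℚ)) from
      (Polynomial.aeval_map_algebraMap _ _ _).symm, hqc, _root_.map_mul,
      aeval_p_eq_zero m hm p hp hpd, mul_zero]
  rw [hq0, zero_mul, Matrix.zero_mulVec]

lemma dvd_of_phi_eq_zero (m : ℕ) (hm : 1 ≤ m) (p : Polynomial ℚ) (hp : p.Monic)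
    (hpd : p.natDegree = m) (q : Polynomial ℤ) (c : ℤ) (hc : c ≠ 0) (hq : q.IsPrimitive)
    (hqc : q.map (Int.castRingHom ℚ) = Polynomial.C (c : ℚ) * p)
    (f : Polynomial ℤ) (hf : phi m hm p f = 0) : q ∣ f := by
  set F := f.map (Int.castRingHom ℚ) with hF
  -- p divides F
  have hdiv : p ∣ F := by
    have hmod := Polynomial.modByMonic_add_div F p
    set r := F %ₘ p with hr
    have hrdeg : r.degree < p.degree := Polynomial.degree_modByMonic_lt F hp
    have hrC : Polynomial.aeval (companion m p) F *ᵥ Pi.single (⟨0, hm⟩ : Fin m) (1:ℚ)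
        = Polynomial.aeval (companion m p) r *ᵥ Pi.single (⟨0, hm⟩ : Fin m) (1:ℚ) := by
      conv_lhs => rw [← hmod]
      rw [_root_.map_add, _root_.map_mul, aeval_p_eq_zero m hm p hp hpd, zero_mul, add_zero]
    have hphiF : Polynomial.aeval (companion m p) F *ᵥ Pi.single (⟨0, hm⟩ : Fin m) (1:ℚ) = 0 := by
      rw [show Polynomial.aeval (companion m p) F = Polynomial.aeval (companion m p) f from
        Polynomial.aeval_map_algebraMap _ _ _]
      exact hf
    have hrn : r.natDegree < m := by
      rcases eq_or_ne r 0 with h0 | h0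
      · simpa [h0] using Nat.lt_of_lt_of_le Nat.zero_lt_one hm
      · have := Polynomial.natDegree_lt_natDegree h0 hrdeg
        rwa [hpd] at this
    have hrval : Polynomial.aeval (companion m p) r *ᵥ Pi.single (⟨0, hm⟩ : Fin m) (1:ℚ)
        = fun i : Fin m => r.coeff i := by
      rw [Polynomial.aeval_eq_sum_range' hrn]
      have hmapsum := _root_.map_sum
        (Matrix.mulVec.addMonoidHomLeft (Pi.single (⟨0, hm⟩ : Fin m) (1:ℚ)))
        (fun i => r.coeff i • (companion m p)^i) (Finset.range m)
      simp only [Matrix.mulVec.addMonoidHomLeft] at hmapsum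
      rw [show (∑ i ∈ Finset.range m, r.coeff i • (companion m p)^i) *ᵥ
          Pi.single (⟨0, hm⟩ : Fin m) (1:ℚ)
          = ∑ i ∈ Finset.range m, (r.coeff i • (companion m p)^i) *ᵥ
            Pi.single (⟨0, hm⟩ : Fin m) (1:ℚ) from hmapsum, Finset.sum_range]
      funext j
      simp only [Finset.sum_apply, Matrix.smul_mulVec]
      rw [Finset.sum_congr rfl (fun i _ => by
        rw [pow_mulVec_e1 m hm p i i.isLt])]
      simp [Pi.single_apply]
    have hr0 : r = 0 := by
      ext n
      rcases lt_or_ge n m with hn | hn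
      · have := congrFun (hrC ▸ hphiF) ⟨n, hn⟩
        rw [congrFun hrval ⟨n, hn⟩] at this
        simpa using this
      · exact Polynomial.coeff_eq_zero_of_natDegree_lt (lt_of_lt_of_le hrn hn)
    refine ⟨F /ₘ p, ?_⟩
    conv_lhs => rw [← hmod]
    rw [hr0, zero_add]
  -- Gauss: q ∣ f
  rcases eq_or_ne f 0 with rfl | hf0
  · exact dvd_zero q
  have hqF : q.map (Int.castRingHom ℚ) ∣ F := by
    obtain ⟨g, hg⟩ := hdiv
    refine ⟨Polynomial.C (c : ℚ)⁻¹ * g, ?_⟩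
    rw [hqc, hg]
    rw [show Polynomial.C ((c:ℚ)) * p * (Polynomial.C (c : ℚ)⁻¹ * g)
      = (Polynomial.C ((c:ℚ)) * Polynomial.C (c : ℚ)⁻¹) * (p * g) by ring]
    rw [← Polynomial.C_mul, mul_inv_cancel₀ (by exact_mod_cast hc), Polynomial.C_1, one_mul]
  have hqPP : q.map (Int.castRingHom ℚ) ∣ f.primPart.map (Int.castRingHom ℚ) := by
    have : F = Polynomial.C ((f.content : ℚ)) * f.primPart.map (Int.castRingHom ℚ) := by
      rw [hF]
      conv_lhs => rw [f.eq_C_content_mul_primPart]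
      rw [Polynomial.map_mul, Polynomial.map_C]
      rfl
    rw [this] at hqF
    have hcont : ((f.content : ℚ)) ≠ 0 := by
      exact_mod_cast fun h => hf0 (Polynomial.content_eq_zero_iff.mp h)
    have hcu : IsUnit (Polynomial.C ((f.content : ℚ))) :=
      Polynomial.isUnit_C.mpr (isUnit_iff_ne_zero.mpr hcont)
    exact (IsUnit.dvd_mul_left hcu).mp hqF
  have := (Polynomial.IsPrimitive.Int.dvd_iff_map_cast_dvd_map_cast q f.primPart hq
    ).mpr hqPP
  exact this.trans f.primPart_dvd

lemma phi_mem_intSpan (m : ℕ) (hm : 1 ≤ m) (p : Polynomial ℚ) (f : Polynomial ℤ) :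
    phi m hm p f ∈ intSpan m (companion m p) := by
  induction f using Polynomial.induction_on' with
  | add f g hf hg =>
    rw [map_add]
    exact AddSubgroup.add_mem _ hf hg
  | monomial n a =>
    apply AddSubgroup.subset_closure
    refine ⟨n, Pi.single (⟨0, hm⟩ : Fin m) a, ?_⟩
    rw [phi_apply, Polynomial.aeval_monomial]
    have : ((fun i => (((Pi.single (⟨0, hm⟩ : Fin m) a : Fin m → ℤ)) i : ℚ)) : Fin m → ℚ)
        = (a : ℚ) • (Pi.single (⟨0, hm⟩ : Fin m) (1:ℚ) : Fin m → ℚ) := by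
      funext i
      rcases eq_or_ne i (⟨0, hm⟩ : Fin m) with rfl | hi
      · simp
      · simp [Pi.single_apply, hi]
    rw [this, Matrix.mulVec_smul]
    rw [show (algebraMap ℤ (Matrix (Fin m) (Fin m) ℚ)) a * (companion m p)^n
        = (a : ℚ) • (companion m p)^n by
      rw [Algebra.algebraMap_eq_smul_one]
      rw [show ((a : ℤ) • (1 : Matrix (Fin m) (Fin m) ℚ)) = ((a:ℚ) • (1 : Matrix (Fin m) (Fin m) ℚ))
        by ext i j; by_cases h : i = j <;> simp [Matrix.one_apply, h]]
      rw [smul_mul_assoc, one_mul]]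
    rw [Matrix.smul_mulVec]

lemma intSpan_le_range (m : ℕ) (hm : 1 ≤ m) (p : Polynomial ℚ)
    (x : Fin m → ℚ) (hx : x ∈ intSpan m (companion m p)) :
    ∃ f : Polynomial ℤ, phi m hm p f = x := by
  revert x
  have : intSpan m (companion m p) ≤ AddMonoidHom.range ((phi m hm p).toAddMonoidHom) := by
    rw [intSpan, AddSubgroup.closure_le]
    rintro x ⟨j, z, rfl⟩
    refine ⟨Polynomial.X^j * ∑ i : Fin m, Polynomial.C (z i) * Polynomial.X^(i:ℕ), ?_⟩
    have hz : ((fun i => ((z i : ℚ))) : Fin m → ℚ)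
        = ∑ i : Fin m, (z i : ℚ) • (Pi.single i (1:ℚ) : Fin m → ℚ) := by
      funext j
      simp [Pi.single_apply]
    rw [LinearMap.toAddMonoidHom_coe, phi_apply, _root_.map_mul, Polynomial.aeval_X_pow,
      ← Matrix.mulVec_mulVec]
    have hs : Polynomial.aeval (companion m p)
        (∑ i : Fin m, Polynomial.C (z i) * Polynomial.X^(i:ℕ))
        = ∑ i : Fin m, Polynomial.aeval (companion m p)
            (Polynomial.C (z i) * Polynomial.X^(i:ℕ)) :=
      _root_.map_sum _ _ _
    rw [hs, hz]
    have hms := _root_.map_sum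
      (Matrix.mulVec.addMonoidHomLeft (Pi.single (⟨0, hm⟩ : Fin m) (1:ℚ)))
      (fun i : Fin m => Polynomial.aeval (companion m p) (Polynomial.C (z i) * Polynomial.X^(i:ℕ)))
      Finset.univ
    simp only [Matrix.mulVec.addMonoidHomLeft] at hms
    rw [show (∑ i : Fin m, Polynomial.aeval (companion m p)
          (Polynomial.C (z i) * Polynomial.X^(i:ℕ))) *ᵥ Pi.single (⟨0, hm⟩ : Fin m) (1:ℚ)
        = ∑ i : Fin m, (Polynomial.aeval (companion m p)
          (Polynomial.C (z i) * Polynomial.X^(i:ℕ))) *ᵥ Pi.single (⟨0, hm⟩ : Fin m) (1:ℚ)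
      from hms]
    refine congrArg (fun v => companion m p ^ j *ᵥ v) ?_
    refine Finset.sum_congr rfl fun i _ => ?_
    rw [_root_.map_mul, Polynomial.aeval_C, Polynomial.aeval_X_pow, ← Matrix.mulVec_mulVec,
      pow_mulVec_e1 m hm p i i.isLt]
    have halg : (algebraMap ℤ (Matrix (Fin m) (Fin m) ℚ)) (z i) *ᵥ
          (Pi.single (⟨(i:ℕ), i.isLt⟩ : Fin m) (1:ℚ) : Fin m → ℚ)
        = (z i : ℚ) • (Pi.single i (1:ℚ) : Fin m → ℚ) := by
      funext k
      rcases eq_or_ne k i with rfl | hk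
      · simp [← Matrix.diagonal_intCast (n := Fin m), Matrix.diagonal_apply, Pi.single_apply]
      · simp [← Matrix.diagonal_intCast (n := Fin m), Matrix.diagonal_apply, Pi.single_apply, hk]
    rw [halg]
  intro x hx
  obtain ⟨f, hf⟩ := this hx
  exact ⟨f, hf⟩

lemma phi_X_mul (m : ℕ) (hm : 1 ≤ m) (p : Polynomial ℚ) (g : Polynomial ℤ) :
    phi m hm p (Polynomial.X * g) = companion m p *ᵥ phi m hm p g := by
  rw [phi_apply, phi_apply, _root_.map_mul, Polynomial.aeval_X, ← Matrix.mulVec_mulVec]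

lemma phi_sum (m : ℕ) (hm : 1 ≤ m) (p : Polynomial ℚ) (ℓ : ℕ) (b : ℕ → ℤ) :
    phi m hm p (∑ i ∈ Finset.range (ℓ+1), Polynomial.C (b i) * Polynomial.X^i)
      = ∑ i ∈ Finset.range (ℓ+1),
          (b i : ℚ) • ((companion m p)^i *ᵥ Pi.single (⟨0, hm⟩ : Fin m) (1:ℚ)) := by
  rw [_root_.map_sum]
  refine Finset.sum_congr rfl fun i _ => ?_
  rw [phi_apply, _root_.map_mul, Polynomial.aeval_C, Polynomial.aeval_X_pow]
  rw [show (algebraMap ℤ (Matrix (Fin m) (Fin m) ℚ)) (b i) * (companion m p)^i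
      = (b i : ℚ) • (companion m p)^i by
    rw [Algebra.algebraMap_eq_smul_one]
    rw [show ((b i : ℤ) • (1 : Matrix (Fin m) (Fin m) ℚ))
        = (((b i):ℚ) • (1 : Matrix (Fin m) (Fin m) ℚ))
      by ext x y; by_cases h : x = y <;> simp [Matrix.one_apply, h]]
    rw [smul_mul_assoc, one_mul]]
  rw [Matrix.smul_mulVec]

theorem stmt2 (m : ℕ) (hm : 1 ≤ m) (p : Polynomial ℚ) (hp : p.Monic) (hpd : p.natDegree = m)
    (q : Polynomial ℤ) (c : ℤ) (hc : c ≠ 0) (hq : q.IsPrimitive)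
    (hqc : q.map (Int.castRingHom ℚ) = Polynomial.C (c : ℚ) * p) :
    ∃ h : intSpan m (companion m p) ≃+ (Polynomial ℤ ⧸ Ideal.span {q}),
      -- `h` sends `Σ_{i=0}^{ℓ} b_i C^i e₁` to the class of `Σ_{i=0}^{ℓ} b_i t^i`
      -- (in particular this assignment is well defined)
      (∀ (ℓ : ℕ) (b : ℕ → ℤ) (v : intSpan m (companion m p)),
        (v : Fin m → ℚ) =
            ∑ i ∈ Finset.range (ℓ + 1),
              (b i : ℚ) • ((companion m p ^ i) *ᵥ Pi.single (⟨0, hm⟩ : Fin m) (1 : ℚ)) →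
          h v = Ideal.Quotient.mk (Ideal.span {q})
            (∑ i ∈ Finset.range (ℓ + 1), Polynomial.C (b i) * Polynomial.X ^ i)) ∧
      -- `h (C · v) = t · h v`
      (∀ v w : intSpan m (companion m p),
        (w : Fin m → ℚ) = companion m p *ᵥ (v : Fin m → ℚ) →
          (h w : Polynomial ℤ ⧸ Ideal.span {q}) =
            Ideal.Quotient.mk (Ideal.span {q}) Polynomial.X * h v) := by
  classical
  set S : Submodule ℤ (Fin m → ℚ) := AddSubgroup.toIntSubmodule (intSpan m (companion m p))
    with hS
  have hmem : ∀ f, phi m hm p f ∈ S := fun f => phi_mem_intSpan m hm p f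
  set φ' : Polynomial ℤ →ₗ[ℤ] S := (phi m hm p).codRestrict S hmem with hφ'
  set I : Submodule ℤ (Polynomial ℤ) := (Ideal.span {q}).restrictScalars ℤ with hI
  have hle : I ≤ LinearMap.ker φ' := by
    intro f hf
    have hdvd : q ∣ f := (Ideal.mem_span_singleton).mp hf
    have h0 : phi m hm p f = 0 := phi_eq_zero_of_dvd m hm p hp hpd q c hqc f hdvd
    rw [hφ', LinearMap.ker_codRestrict]
    exact h0
  set ψ : (Polynomial ℤ ⧸ I) →ₗ[ℤ] S := I.liftQ φ' hle with hψ
  have hψinj : Function.Injective ψ := by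
    rw [← LinearMap.ker_eq_bot]
    apply Submodule.ker_liftQ_eq_bot
    intro f hf
    rw [hφ', LinearMap.ker_codRestrict] at hf
    exact (Ideal.mem_span_singleton).mpr
      (dvd_of_phi_eq_zero m hm p hp hpd q c hc hq hqc f hf)
  have hψsurj : Function.Surjective ψ := by
    rintro ⟨x, hx⟩
    obtain ⟨f, hf⟩ := intSpan_le_range m hm p x hx
    exact ⟨Submodule.Quotient.mk f, Subtype.ext hf⟩
  set eqv : (Polynomial ℤ ⧸ Ideal.span {q}) ≃ₗ[ℤ] (Polynomial ℤ ⧸ I) :=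
    (Submodule.Quotient.restrictScalarsEquiv ℤ (Ideal.span {q})).symm with heqv
  set total : (Polynomial ℤ ⧸ Ideal.span {q}) →+ intSpan m (companion m p) :=
    ((ψ.comp eqv.toLinearMap).toAddMonoidHom) with htot
  have htb : Function.Bijective total := by
    constructor
    · exact hψinj.comp eqv.injective
    · exact hψsurj.comp eqv.surjective
  set E := AddEquiv.ofBijective total htb with hE
  have hEmk : ∀ f : Polynomial ℤ,
      ((E (Ideal.Quotient.mk (Ideal.span {q}) f) : intSpan m (companion m p)) : Fin m → ℚ)
        = phi m hm p f := by
    intro f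
    have h1 : E (Ideal.Quotient.mk (Ideal.span {q}) f) = total (Ideal.Quotient.mk _ f) := rfl
    have h2 : eqv (Ideal.Quotient.mk (Ideal.span {q}) f) = Submodule.Quotient.mk f := by
      rw [heqv]
      exact Submodule.Quotient.restrictScalarsEquiv_symm_mk ℤ (Ideal.span {q}) f
    have h3 : total (Ideal.Quotient.mk (Ideal.span {q}) f)
        = ψ (eqv (Ideal.Quotient.mk (Ideal.span {q}) f)) := rfl
    rw [h1, h3, h2, hψ, Submodule.liftQ_apply]
    rfl
  refine ⟨E.symm, ?_, ?_⟩
  · intro ℓ b v hv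
    rw [AddEquiv.symm_apply_eq]
    apply Subtype.ext
    rw [hEmk, phi_sum m hm p ℓ b, hv]
  · intro v w hw
    obtain ⟨g, hg⟩ := Ideal.Quotient.mk_surjective (E.symm v)
    have hvE : v = E (Ideal.Quotient.mk (Ideal.span {q}) g) := by
      rw [hg, AddEquiv.apply_symm_apply]
    have hvphi : (v : Fin m → ℚ) = phi m hm p g := by rw [hvE, hEmk]
    have hwphi : (w : Fin m → ℚ) = phi m hm p (Polynomial.X * g) := by
      rw [phi_X_mul, hw, hvphi]
    have hwE : E.symm w = Ideal.Quotient.mk (Ideal.span {q}) (Polynomial.X * g) := by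
      rw [AddEquiv.symm_apply_eq]
      exact Subtype.ext (by rw [hEmk]; exact hwphi)
    rw [hwE, ← hg, _root_.map_mul]
end

section
/- Let p ∈ ℚ[t] be monic of degree m ≥ 1 with p(0) ≠ 0, let C ∈ ℚ^{m×m} be its companion matrix, and let q = c·p ∈ ℤ[t], where c ∈ ℤ∖{0} is chosen so that q has coprime coefficients. Then the index of the additive subgroup Cℤ^m[C] in ℤ^m[C] equals |q(0)|, i.e. [ℤ^m[C] : Cℤ^m[C]] = |q(0)|. -/
open Matrix Polynomial

/-- The index `[ℤ^m[M] : Mℤ^m[M]]` of the additive subgroup `Mℤ^m[M]` in `ℤ^m[M]`. -/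
noncomputable def idx (m : ℕ) (M : Matrix (Fin m) (Fin m) ℚ) : ℕ :=
  ((intSpan m M).map (Matrix.mulVecLin M).toAddMonoidHom).relIndex (intSpan m M)

namespace Stmt3Aux

variable {m : ℕ} (hm : 1 ≤ m) (p : Polynomial ℚ)

/-- `Φ h = h(C) e₀` as an additive hom `ℤ[X] →+ ℚ^m`. -/
noncomputable def Phi : Polynomial ℤ →+ (Fin m → ℚ) where
  toFun h := (Polynomial.aeval (companion m p) h) *ᵥ Pi.single (⟨0, hm⟩ : Fin m) 1
  map_zero' := by funext i; simp
  map_add' a b := by funext i; simp [Matrix.add_mulVec]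

lemma Phi_apply (h : Polynomial ℤ) :
    Phi hm p h = (Polynomial.aeval (companion m p) h) *ᵥ Pi.single (⟨0, hm⟩ : Fin m) 1 := rfl

lemma powA : ∀ (k : ℕ) (hk : k < m),
    (companion m p ^ k) *ᵥ Pi.single (⟨0, hm⟩ : Fin m) 1 = Pi.single (⟨k, hk⟩ : Fin m) 1 := by
  intro k
  induction k with
  | zero => intro hk; funext i; simp [Matrix.one_apply, Pi.single_apply]
  | succ k ih =>
    intro hk
    have hk' : k < m := Nat.lt_of_succ_lt hk
    rw [pow_succ', ← Matrix.mulVec_mulVec, ih hk', Matrix.mulVec_single_one]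
    funext i
    simp only [companion, Matrix.col_apply, Matrix.of_apply, Pi.single_apply, mul_one]
    rw [if_neg (Nat.ne_of_lt hk)]
    by_cases h : i = (⟨k + 1, hk⟩ : Fin m)
    · rw [if_pos (by rw [h]), if_pos h]
    · rw [if_neg (fun he => h (Fin.ext he)), if_neg h]

include hm

lemma sum_mulVec {ι : Type*} (s : Finset ι) (A : ι → Matrix (Fin m) (Fin m) ℚ)
    (v : Fin m → ℚ) : (∑ i ∈ s, A i) *ᵥ v = ∑ i ∈ s, (A i *ᵥ v) := by
  induction s using Finset.cons_induction with
  | empty => simp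
  | cons a s ha ih => simp [Finset.sum_cons, Matrix.add_mulVec, ih]

lemma natDeg_lt {g : Polynomial ℚ} (h : g.degree < (m : ℕ)) : g.natDegree < m := by
  rcases eq_or_ne g 0 with rfl | hg
  · simpa using (show 0 < m by omega)
  · exact (Polynomial.natDegree_lt_iff_degree_lt hg).2 h

/-- For `g` of degree `< m`, `g(C) e₀` is the coefficient vector of `g`. -/
lemma coeffVec {g : Polynomial ℚ} (hg : g.natDegree < m) :
    (Polynomial.aeval (companion m p) g) *ᵥ Pi.single (⟨0, hm⟩ : Fin m) 1 =
      fun i : Fin m => g.coeff (i : ℕ) := by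
  conv_lhs => rw [Polynomial.as_sum_range' g m hg]
  rw [map_sum, sum_mulVec hm, ← Fin.sum_univ_eq_sum_range
    (fun i => (Polynomial.aeval (companion m p) ((Polynomial.monomial i) (g.coeff i)))
      *ᵥ Pi.single (⟨0, hm⟩ : Fin m) 1)]
  funext j
  rw [Finset.sum_apply]
  have : ∀ i : Fin m,
      ((Polynomial.aeval (companion m p) ((Polynomial.monomial (i:ℕ)) (g.coeff i)))
        *ᵥ Pi.single (⟨0, hm⟩ : Fin m) 1) j = g.coeff i • (Pi.single i (1:ℚ) : Fin m → ℚ) j := by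
    intro i
    rw [Polynomial.aeval_monomial, Algebra.algebraMap_eq_smul_one, smul_mul_assoc, one_mul,
      Matrix.smul_mulVec, powA hm p i i.isLt]
    simp
  rw [Finset.sum_congr rfl (fun i _ => this i)]
  simp [Pi.single_apply]

variable (hp : p.Monic) (hpd : p.natDegree = m)
include hp hpd

lemma p_ann : (Polynomial.aeval (companion m p) p) *ᵥ Pi.single (⟨0, hm⟩ : Fin m) 1 = 0 := by
  have hdegp : p.degree = (m : ℕ) := by
    rw [Polynomial.degree_eq_natDegree hp.ne_zero, hpd]
  have h1 : p.degree = ((X : Polynomial ℚ) ^ m).degree := by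
    rw [hdegp, Polynomial.degree_X_pow]
  have h2 : p.leadingCoeff = ((X : Polynomial ℚ) ^ m).leadingCoeff := by
    rw [hp.leadingCoeff, Polynomial.leadingCoeff_X_pow]
  have hr : (p - X ^ m).degree < ((m : ℕ) : WithBot ℕ) := by
    have := Polynomial.degree_sub_lt h1 hp.ne_zero h2
    rwa [hdegp] at this
  have hsplit : (Polynomial.aeval (companion m p)) p
      = (Polynomial.aeval (companion m p)) (p - X ^ m)
        + (Polynomial.aeval (companion m p)) (X ^ m : Polynomial ℚ) := by
    rw [← map_add, sub_add_cancel]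
  rw [hsplit, Matrix.add_mulVec, coeffVec hm p (natDeg_lt hm hr)]
  have hm' : m - 1 + 1 = m := Nat.succ_pred_eq_of_pos hm
  have hXm : (Polynomial.aeval (companion m p) (X ^ m : Polynomial ℚ))
      *ᵥ Pi.single (⟨0, hm⟩ : Fin m) 1 = fun i : Fin m => -p.coeff (i : ℕ) := by
    have hpow := pow_succ' (companion m p) (m - 1)
    rw [hm'] at hpow
    rw [Polynomial.aeval_X_pow, hpow, ← Matrix.mulVec_mulVec,
      powA hm p (m-1) (by omega), Matrix.mulVec_single_one]
    funext i
    simp [companion, Matrix.col_apply, hm']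
  rw [hXm]
  funext i
  simp [Polynomial.coeff_sub, Polynomial.coeff_X_pow, Nat.ne_of_lt i.isLt]

lemma ker_q (h : Polynomial ℚ) :
    (Polynomial.aeval (companion m p) h) *ᵥ Pi.single (⟨0, hm⟩ : Fin m) 1 = 0 ↔ p ∣ h := by
  have hdegp : p.degree = (m : ℕ) := by
    rw [Polynomial.degree_eq_natDegree hp.ne_zero, hpd]
  have hmod0 : ∀ u : Polynomial ℚ, (Polynomial.aeval (companion m p) (p * u))
      *ᵥ Pi.single (⟨0, hm⟩ : Fin m) 1 = 0 := by
    intro u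
    rw [mul_comm, _root_.map_mul, ← Matrix.mulVec_mulVec, p_ann hm p hp hpd,
      Matrix.mulVec_zero]
  have hdeg : (h %ₘ p).natDegree < m :=
    natDeg_lt hm (by rw [← hdegp]; exact Polynomial.degree_modByMonic_lt h hp)
  constructor
  · intro h0
    have hsplit : (Polynomial.aeval (companion m p)) h
        = (Polynomial.aeval (companion m p)) (p * (h /ₘ p))
          + (Polynomial.aeval (companion m p)) (h %ₘ p) := by
      rw [← map_add, add_comm, Polynomial.modByMonic_add_div h p]
    rw [hsplit, Matrix.add_mulVec, hmod0, zero_add, coeffVec hm p hdeg] at h0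
    rw [← Polynomial.modByMonic_eq_zero_iff_dvd hp]
    ext n
    rcases lt_or_ge n m with hn | hn
    · exact congrFun h0 ⟨n, hn⟩
    · simp [Polynomial.coeff_eq_zero_of_natDegree_lt (lt_of_lt_of_le hdeg hn)]
  · intro hdvd
    obtain ⟨u, rfl⟩ := hdvd
    exact hmod0 u

variable {q : Polynomial ℤ} {c : ℤ} (hc : c ≠ 0) (hq : q.IsPrimitive)
  (hqc : q.map (Int.castRingHom ℚ) = Polynomial.C (c : ℚ) * p)
include hc hq hqc

lemma Phi_eq_zero_iff (h : Polynomial ℤ) : Phi hm p h = 0 ↔ q ∣ h := by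
  have hqc' : q.map (algebraMap ℤ ℚ) = Polynomial.C (c : ℚ) * p := by
    rwa [algebraMap_int_eq]
  have hcu : IsUnit (Polynomial.C (c : ℚ)) :=
    Polynomial.isUnit_C.2 (Ne.isUnit (by exact_mod_cast hc))
  rw [Phi_apply, ← Polynomial.aeval_map_algebraMap ℚ (companion m p) h,
    ker_q hm p hp hpd]
  constructor
  · intro hd
    have hd' : q.map (algebraMap ℤ ℚ) ∣ h.map (algebraMap ℤ ℚ) := by
      rw [hqc']; exact (hcu.mul_left_dvd).2 hd
    rcases eq_or_ne h 0 with rfl | h0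
    · simp
    have hcont : ((h.content : ℤ) : ℚ) ≠ 0 := by
      exact_mod_cast fun hcz => h0 (Polynomial.content_eq_zero_iff.1 (by exact_mod_cast hcz))
    have hmapsplit : h.map (algebraMap ℤ ℚ)
        = Polynomial.C ((h.content : ℤ) : ℚ) * (h.primPart).map (algebraMap ℤ ℚ) := by
      conv_lhs => rw [h.eq_C_content_mul_primPart]
      rw [Polynomial.map_mul, Polynomial.map_C]
      rfl
    have hd'' : q.map (algebraMap ℤ ℚ) ∣ (h.primPart).map (algebraMap ℤ ℚ) := by
      rw [hmapsplit] at hd'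
      exact ((Polynomial.isUnit_C.2 hcont.isUnit).dvd_mul_left).1 hd'
    exact (hq.dvd_of_fraction_map_dvd_fraction_map
      hd'').trans h.primPart_dvd
  · rintro ⟨d, rfl⟩
    have hpq : p ∣ q.map (algebraMap ℤ ℚ) := by
      rw [hqc']; exact (hcu.dvd_mul_left).2 dvd_rfl
    rw [Polynomial.map_mul]
    exact hpq.trans (dvd_mul_right _ _)

omit hc hq hqc hp hpd

lemma Phi_X_mul (h : Polynomial ℤ) :
    Phi hm p (X * h) = companion m p *ᵥ Phi hm p h := by
  rw [Phi_apply, Phi_apply, _root_.map_mul, Polynomial.aeval_X, ← Matrix.mulVec_mulVec]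

lemma Phi_C_mul_X_pow (a : ℤ) (n : ℕ) :
    Phi hm p (Polynomial.C a * X ^ n) =
      (a : ℚ) • ((companion m p ^ n) *ᵥ Pi.single (⟨0, hm⟩ : Fin m) 1) := by
  rw [Phi_apply, _root_.map_mul, Polynomial.aeval_C, Polynomial.aeval_X_pow,
    Algebra.algebraMap_eq_smul_one, smul_mul_assoc, one_mul,
    Matrix.smul_mulVec, ← Int.cast_smul_eq_zsmul ℚ]

lemma single_cast (j : Fin m) (a : ℤ) :
    (fun i => (((Pi.single j a : Fin m → ℤ)) i : ℚ)) = (a : ℚ) • (Pi.single j (1 : ℚ) : Fin m → ℚ) := by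
  funext i
  by_cases h : i = j <;> simp [Pi.single_apply, h]

lemma Phi_intvec (j : ℕ) (z : Fin m → ℤ) :
    Phi hm p (X ^ j * ∑ i : Fin m, Polynomial.C (z i) * X ^ (i : ℕ)) =
      (companion m p ^ j) *ᵥ fun i => (z i : ℚ) := by
  have key : ∀ i : Fin m,
      (Polynomial.aeval (companion m p) (Polynomial.C (z i) * X ^ (i : ℕ)))
        *ᵥ Pi.single (⟨0, hm⟩ : Fin m) 1 = (z i : ℚ) • (Pi.single i (1:ℚ) : Fin m → ℚ) := by
    intro i
    have := Phi_C_mul_X_pow hm p (z i) (i : ℕ)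
    rw [Phi_apply] at this
    rw [this, powA hm p (i : ℕ) i.isLt, Fin.eta]
  have hsum : (Polynomial.aeval (companion m p) (∑ i : Fin m, Polynomial.C (z i) * X ^ (i : ℕ)))
      *ᵥ Pi.single (⟨0, hm⟩ : Fin m) 1 = fun i => (z i : ℚ) := by
    rw [map_sum, sum_mulVec hm, Finset.sum_congr rfl (fun i _ => key i)]
    funext j'
    rw [Finset.sum_apply]
    simp [Pi.single_apply]
  rw [Phi_apply, _root_.map_mul, Polynomial.aeval_X_pow, ← Matrix.mulVec_mulVec, hsum]

lemma range_eq : intSpan m (companion m p) = (Phi hm p).range := by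
  apply le_antisymm
  · rw [intSpan]
    apply (AddSubgroup.closure_le _).2
    rintro x ⟨j, z, rfl⟩
    exact ⟨X ^ j * ∑ i : Fin m, Polynomial.C (z i) * X ^ (i : ℕ), Phi_intvec hm p j z⟩
  · rintro x ⟨h, rfl⟩
    induction h using Polynomial.induction_on' with
    | add f g hf hg => rw [map_add]; exact AddSubgroup.add_mem _ hf hg
    | monomial n a =>
      apply AddSubgroup.subset_closure
      refine ⟨n, Pi.single (⟨0, hm⟩ : Fin m) a, ?_⟩
      rw [← Polynomial.C_mul_X_pow_eq_monomial, Phi_C_mul_X_pow hm p a n,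
        single_cast hm, Matrix.mulVec_smul]

end Stmt3Aux

theorem stmt3 (m : ℕ) (hm : 1 ≤ m) (p : Polynomial ℚ) (hp : p.Monic) (hpd : p.natDegree = m)
    (hp0 : p.eval 0 ≠ 0)
    (q : Polynomial ℤ) (c : ℤ) (hc : c ≠ 0) (hq : q.IsPrimitive)
    (hqc : q.map (Int.castRingHom ℚ) = Polynomial.C (c : ℚ) * p) :
    idx m (companion m p) = (q.eval 0).natAbs := by

  classical
  have hL : intSpan m (companion m p) = (Stmt3Aux.Phi hm p).range := Stmt3Aux.range_eq hm p
  set Φ := Stmt3Aux.Phi hm p with hΦ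
  set J : Ideal (Polynomial ℤ) := Ideal.span {Polynomial.X, q} with hJdef
  have hXJ : (Polynomial.X : Polynomial ℤ) ∈ J := Ideal.subset_span (Set.mem_insert _ _)
  have hqJ : q ∈ J := Ideal.subset_span (Set.mem_insert_of_mem _ rfl)
  have hker : ∀ h, Φ h = 0 ↔ q ∣ h := fun h =>
    Stmt3Aux.Phi_eq_zero_iff hm p hp hpd hc hq hqc h
  have hXmul : ∀ h, Φ (Polynomial.X * h) = companion m p *ᵥ Φ h := Stmt3Aux.Phi_X_mul hm p
  rw [idx, hL]
  show ((Φ.range.map (Matrix.mulVecLin (companion m p)).toAddMonoidHom).addSubgroupOf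
    Φ.range).index = _
  have hsub : (Φ.range.map (Matrix.mulVecLin (companion m p)).toAddMonoidHom).addSubgroupOf
      Φ.range = (J.toAddSubgroup).map Φ.rangeRestrict := by
    ext x
    simp only [AddSubgroup.mem_addSubgroupOf, AddSubgroup.mem_map, AddMonoidHom.mem_range,
      Submodule.mem_toAddSubgroup]
    constructor
    · rintro ⟨y, ⟨h, rfl⟩, hy⟩
      refine ⟨Polynomial.X * h, Ideal.mul_mem_right h J hXJ, ?_⟩
      apply Subtype.ext
      show Φ (Polynomial.X * h) = (x : Fin m → ℚ)
      rw [hXmul h, ← hy]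
      rfl
    · rintro ⟨g, hgJ, hgx⟩
      obtain ⟨a, b, hab⟩ := Ideal.mem_span_pair.1 hgJ
      refine ⟨Φ a, ⟨a, rfl⟩, ?_⟩
      have hg : Φ g = companion m p *ᵥ Φ a := by
        rw [← hab, map_add]
        have h1 : Φ (a * Polynomial.X) = companion m p *ᵥ Φ a := by
          rw [mul_comm]; exact hXmul a
        have h2 : Φ (b * q) = 0 := (hker _).2 (dvd_mul_left q b)
        rw [h1, h2, add_zero]
      have : Φ g = (x : Fin m → ℚ) := by rw [← hgx]; rfl
      rw [← this, hg]
      rfl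
  rw [hsub]
  have hkerle : Φ.rangeRestrict.ker ≤ J.toAddSubgroup := by
    intro h hh
    have : Φ h = 0 := by
      have := congrArg (Subtype.val) (AddMonoidHom.mem_ker.1 hh)
      simpa using this
    obtain ⟨d, rfl⟩ := (hker h).1 this
    exact Ideal.mul_mem_right d J hqJ
  rw [AddSubgroup.index_map_eq _ Φ.rangeRestrict_surjective hkerle]
  have hJadd : J.toAddSubgroup =
      AddSubgroup.comap (Polynomial.evalRingHom (0 : ℤ)).toAddMonoidHom
        (AddSubgroup.zmultiples (q.eval 0)) := by
    ext h
    simp only [Submodule.mem_toAddSubgroup, AddSubgroup.mem_comap,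
      AddSubgroup.mem_zmultiples_iff, RingHom.toAddMonoidHom_eq_coe,
      AddMonoidHom.coe_coe, Polynomial.coe_evalRingHom]
    constructor
    · intro hJ
      obtain ⟨a, b, hab⟩ := Ideal.mem_span_pair.1 hJ
      refine ⟨b.eval 0, ?_⟩
      rw [← hab]
      simp [mul_comm]
    · rintro ⟨k, hk⟩
      have hXd : Polynomial.X ∣ (h - Polynomial.C k * q) := by
        rw [Polynomial.X_dvd_iff]
        simp only [Polynomial.coeff_sub, Polynomial.coeff_zero_eq_eval_zero]
        simp [← hk, mul_comm]
      obtain ⟨a, ha⟩ := hXd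
      apply Ideal.mem_span_pair.2
      refine ⟨a, Polynomial.C k, ?_⟩
      rw [mul_comm a Polynomial.X, ← ha]
      ring
  rw [hJadd,
    AddSubgroup.index_comap_of_surjective _ (fun n => ⟨Polynomial.C n, Polynomial.eval_C⟩),
    Int.index_zmultiples]
end

section
/- Let q ∈ ℤ[t] have degree m ≥ 1 and coprime coefficients, let p = q / lc(q) ∈ ℚ[t] be the associated monic polynomial (lc(q) the leading coefficient), let C ∈ ℚ^{m×m} be the companion matrix of p, and let e₁ be the first standard basis vector of ℚ^m. Then every v ∈ ℤ^m[C] can be written in exactly one way as v = Σ_{j≥0} b_j C^j e₁, where (b_j)_{j≥0} is a finitely supported sequence of integers such that b_j ∈ {0, 1, …, |lc(q)| − 1} for every j ≥ m. -/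
open Matrix Polynomial

namespace S4

noncomputable def wv (m : ℕ) (hm : 1 ≤ m) (p : Polynomial ℚ) (j : ℕ) : Fin m → ℚ :=
  (companion m p ^ j) *ᵥ Pi.single (⟨0, hm⟩ : Fin m) (1 : ℚ)

variable {m : ℕ} (hm : 1 ≤ m) (p : Polynomial ℚ)

lemma wv_succ (j : ℕ) : wv m hm p (j+1) = companion m p *ᵥ wv m hm p j := by
  rw [wv, wv, pow_succ', ← mulVec_mulVec]

lemma wv_lt {j : ℕ} (hj : j < m) : wv m hm p j = Pi.single (⟨j, hj⟩ : Fin m) 1 := by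
  induction j with
  | zero => rw [wv, pow_zero, Matrix.one_mulVec]
  | succ k ih =>
    rw [wv_succ, ih (Nat.lt_of_succ_lt hj)]
    funext i
    simp only [mulVec_single_one, col_apply, companion, Matrix.of_apply, mul_one]
    have h1 : k + 1 ≠ m := Nat.ne_of_lt hj
    simp only [Fin.val_mk, h1, if_false]
    rw [Pi.single_apply]
    by_cases h : i = (⟨k+1, hj⟩ : Fin m)
    · subst h; simp
    · have : (i : ℕ) ≠ k + 1 := by
        intro hc; exact h (Fin.ext hc)
      simp [this, h]

lemma wv_single (i : Fin m) : wv m hm p (i : ℕ) = Pi.single i 1 := by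
  rw [wv_lt hm p i.isLt]

lemma sum_single_eq (f : Fin m → ℚ) :
    ∑ i : Fin m, f i • (Pi.single i 1 : Fin m → ℚ) = f := by
  funext j
  rw [Finset.sum_apply]
  have : ∀ i : Fin m, (f i • (Pi.single i (1:ℚ) : Fin m → ℚ)) j
      = if j = i then f i else 0 := by
    intro i; rw [Pi.smul_apply, Pi.single_apply]; simp [mul_ite]
  simp_rw [this]
  simp

lemma wv_pow (j k : ℕ) : wv m hm p (j + k) = (companion m p ^ j) *ᵥ wv m hm p k := by
  rw [wv, wv, pow_add, ← mulVec_mulVec]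

lemma wv_m_base : wv m hm p m = fun i : Fin m => -p.coeff (i : ℕ) := by
  obtain ⟨m', rfl⟩ : ∃ m', m = m' + 1 := ⟨m-1, (Nat.succ_pred_eq_of_pos hm).symm⟩
  rw [wv_succ, wv_lt hm p (Nat.lt_succ_self m')]
  funext i
  simp only [mulVec_single, companion, Matrix.of_apply, mul_one, Fin.val_mk, if_pos rfl]
  simp

lemma wv_m_eq : wv m hm p m = -∑ i : Fin m, p.coeff (i : ℕ) • wv m hm p (i : ℕ) := by
  have h2 : ∑ i : Fin m, p.coeff (i:ℕ) • wv m hm p (i:ℕ)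
      = ∑ i : Fin m, (fun i : Fin m => p.coeff (i:ℕ)) i • (Pi.single i 1 : Fin m → ℚ) := by
    refine Finset.sum_congr rfl fun i _ => by rw [wv_single]
  rw [wv_m_base, h2, sum_single_eq]
  rfl

lemma wv_rec (j : ℕ) :
    wv m hm p (j + m) = -∑ i : Fin m, p.coeff (i : ℕ) • wv m hm p (j + (i : ℕ)) := by
  rw [wv_pow hm p j m, wv_m_eq hm p]
  have : ∀ v : Fin m → ℚ, (companion m p ^ j) *ᵥ v = (companion m p ^ j).mulVecLin v :=
    fun v => rfl
  rw [this, map_neg, map_sum]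
  congr 1
  refine Finset.sum_congr rfl fun i _ => ?_
  rw [LinearMap.map_smul, ← this, ← wv_pow]

noncomputable def lcomb : (ℕ →₀ ℤ) →ₗ[ℤ] (Fin m → ℚ) :=
  Finsupp.linearCombination ℤ (wv m hm p)

lemma lcomb_eq_sum (b : ℕ →₀ ℤ) :
    lcomb hm p b = b.sum fun j bj => (bj : ℚ) • wv m hm p j := by
  rw [lcomb, Finsupp.linearCombination_apply]
  refine Finsupp.sum_congr fun j _ => ?_
  rw [Int.cast_smul_eq_zsmul]

noncomputable def psi : Polynomial ℚ →+ (Fin m → ℚ) :=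
  AddMonoidHom.mk' (fun f => Finsupp.linearCombination ℚ (wv m hm p) f.toFinsupp.coeff)
    (fun f g => by rw [toFinsupp_add, AddMonoidAlgebra.coeff_add, map_add])

lemma psi_monomial (k : ℕ) (a : ℚ) : psi hm p (monomial k a) = a • wv m hm p k := by
  show Finsupp.linearCombination ℚ (wv m hm p) (monomial k a).toFinsupp.coeff = _
  rw [toFinsupp_monomial, AddMonoidAlgebra.coeff_single, Finsupp.linearCombination_single]

variable (hp : p.Monic) (hpm : p.natDegree = m)

include hp hpm in
lemma psi_p_mul (g : Polynomial ℚ) : psi hm p (p * g) = 0 := by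
  induction g using Polynomial.induction_on' with
  | add f g hf hg => rw [mul_add, map_add, hf, hg, add_zero]
  | monomial k a =>
    have key : p * monomial k a = ∑ i ∈ Finset.range (m+1), monomial (k+i) (a * p.coeff i) := by
      rw [mul_comm]
      conv_lhs => rw [p.as_sum_range' (m+1) (by omega)]
      rw [Finset.mul_sum]
      refine Finset.sum_congr rfl fun i _ => ?_
      rw [monomial_mul_monomial]
    rw [key, map_sum]
    simp_rw [psi_monomial]
    rw [Finset.sum_range_succ]
    have hc1 : p.coeff m = 1 := by
      have := hp.coeff_natDegree; rwa [hpm] at this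
    rw [hc1, mul_one, wv_rec hm p k]
    rw [smul_neg, Finset.smul_sum]
    have : ∀ i : Fin m, a • (p.coeff (i:ℕ) • wv m hm p (k + (i:ℕ)))
        = (a * p.coeff (i:ℕ)) • wv m hm p (k + (i:ℕ)) := fun i => smul_smul a _ _
    simp_rw [this]
    rw [Fin.sum_univ_eq_sum_range (fun i => (a * p.coeff i) • wv m hm p (k + i)) m]
    exact add_neg_cancel _

include hp hpm in
lemma psi_eq_zero_iff (f : Polynomial ℚ) : psi hm p f = 0 ↔ p ∣ f := by
  constructor
  · intro h
    have hmod : psi hm p (f %ₘ p) = 0 := by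
      have hdiv := modByMonic_add_div f p
      have : psi hm p (f %ₘ p) + psi hm p (p * (f /ₘ p)) = psi hm p f := by
        rw [← map_add, hdiv]
      rw [psi_p_mul hm p hp hpm, add_zero] at this
      rw [this, h]
    set r := f %ₘ p with hr
    have hdeg : r.degree < (m : WithBot ℕ) := by
      have := degree_modByMonic_lt f hp
      rwa [degree_eq_natDegree hp.ne_zero, hpm] at this
    by_cases hr0 : r = 0
    · exact (modByMonic_eq_zero_iff_dvd hp).mp hr0
    have hnd : r.natDegree < m := (natDegree_lt_iff_degree_lt hr0).mpr hdeg
    have hsupp : r.toFinsupp.coeff.support ⊆ Finset.range m := by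
      intro j hj
      rw [Finset.mem_range]
      have : j ≤ r.natDegree := le_natDegree_of_ne_zero (by
        rw [← toFinsupp_apply]; exact Finsupp.mem_support_iff.mp hj)
      omega
    have hpsi : psi hm p r = fun i : Fin m => r.coeff (i:ℕ) := by
      show Finsupp.linearCombination ℚ (wv m hm p) r.toFinsupp.coeff = _
      rw [Finsupp.linearCombination_apply,
        Finsupp.sum_of_support_subset _ hsupp (fun j a => a • wv m hm p j)
          (fun j _ => zero_smul ℚ _),
        ← Fin.sum_univ_eq_sum_range (fun j => r.toFinsupp.coeff j • wv m hm p j) m]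
      have : ∀ i : Fin m, r.toFinsupp.coeff (i:ℕ) • wv m hm p (i:ℕ)
          = (fun i : Fin m => r.coeff (i:ℕ)) i • (Pi.single i 1 : Fin m → ℚ) := by
        intro i; rw [wv_single]; rfl
      simp_rw [this]
      exact sum_single_eq (fun i : Fin m => r.coeff (i:ℕ))
    rw [hmod] at hpsi
    exfalso
    apply hr0
    ext n
    rcases Nat.lt_or_ge n m with h | h
    · have := congrFun hpsi.symm (⟨n, h⟩ : Fin m)
      simpa using this
    · simp [coeff_eq_zero_of_natDegree_lt (lt_of_lt_of_le hnd h)]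
  · rintro ⟨g, rfl⟩
    exact psi_p_mul hm p hp hpm g

lemma lcomb_eq_psi (b : ℕ →₀ ℤ) :
    lcomb hm p b = psi hm p ((⟨⟨b⟩⟩ : Polynomial ℤ).map (Int.castRingHom ℚ)) := by
  induction b using Finsupp.induction with
  | zero =>
    have : ((⟨⟨0⟩⟩ : Polynomial ℤ)) = 0 := by rw [AddMonoidAlgebra.ofCoeff_zero, ofFinsupp_eq_zero]
    rw [this, Polynomial.map_zero, map_zero, map_zero]
  | single_add a x f haf hx ih =>
    rw [map_add, ih, AddMonoidAlgebra.ofCoeff_add, ofFinsupp_add, AddMonoidAlgebra.ofCoeff_single, ofFinsupp_single, Polynomial.map_add, map_add]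
    congr 1
    rw [lcomb, Finsupp.linearCombination_single, map_monomial, psi_monomial]
    show x • wv m hm p a = ((x : ℚ)) • wv m hm p a
    exact (Int.cast_smul_eq_zsmul ℚ x _).symm

lemma dvd_of_C_mul_dvd {a : ℚ} (ha : a ≠ 0) {g f : Polynomial ℚ}
    (h : g ∣ Polynomial.C a * f) : g ∣ f := by
  rcases h with ⟨t, ht⟩
  refine ⟨Polynomial.C a⁻¹ * t, ?_⟩
  have h1 : Polynomial.C a⁻¹ * (Polynomial.C a * f) = f := by
    rw [← mul_assoc, ← Polynomial.C_mul, inv_mul_cancel₀ ha, Polynomial.C_1, one_mul]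
  calc f = Polynomial.C a⁻¹ * (Polynomial.C a * f) := h1.symm
    _ = Polynomial.C a⁻¹ * (g * t) := by rw [ht]
    _ = g * (Polynomial.C a⁻¹ * t) := by ring

lemma C_mul_dvd_of_dvd {a : ℚ} (ha : a ≠ 0) {g f : Polynomial ℚ} (h : g ∣ f) :
    Polynomial.C a * g ∣ f := by
  rcases h with ⟨t, ht⟩
  refine ⟨Polynomial.C a⁻¹ * t, ?_⟩
  rw [ht]
  calc g * t = (Polynomial.C a * Polynomial.C a⁻¹) * (g * t) := by
        rw [← Polynomial.C_mul, mul_inv_cancel₀ ha, Polynomial.C_1, one_mul]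
    _ = Polynomial.C a * g * (Polynomial.C a⁻¹ * t) := by ring

variable (q : Polynomial ℤ) (hq : q.IsPrimitive)
  (hpq : q.map (Int.castRingHom ℚ) = Polynomial.C ((q.leadingCoeff : ℚ)) * p)

include hp hpm hq hpq in
lemma q_dvd (hq0 : q ≠ 0) (b : ℕ →₀ ℤ) (hb : lcomb hm p b = 0) :
    q ∣ (⟨⟨b⟩⟩ : Polynomial ℤ) := by
  set f : Polynomial ℤ := ⟨⟨b⟩⟩ with hf
  have hcq : ((q.leadingCoeff : ℚ)) ≠ 0 :=
    Int.cast_ne_zero.mpr (leadingCoeff_ne_zero.mpr hq0)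
  have hpdvd : p ∣ f.map (Int.castRingHom ℚ) := by
    rw [← psi_eq_zero_iff hm p hp hpm, ← lcomb_eq_psi]
    exact hb
  by_cases hf0 : f = 0
  · rw [hf0]; exact dvd_zero q
  have hcont : ((f.content : ℚ)) ≠ 0 :=
    Int.cast_ne_zero.mpr (by rwa [Ne, content_eq_zero_iff])
  have hfactor : f.map (Int.castRingHom ℚ)
      = Polynomial.C ((f.content : ℚ)) * f.primPart.map (Int.castRingHom ℚ) := by
    conv_lhs => rw [f.eq_C_content_mul_primPart]
    rw [Polynomial.map_mul, map_C]
    norm_num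
  have hp2 : p ∣ f.primPart.map (Int.castRingHom ℚ) := by
    apply dvd_of_C_mul_dvd hcont
    rw [← hfactor]; exact hpdvd
  have hq2 : q.map (algebraMap ℤ ℚ) ∣ f.primPart.map (algebraMap ℤ ℚ) := by
    rw [algebraMap_int_eq, hpq]
    exact C_mul_dvd_of_dvd hcq hp2
  exact (hq.dvd_of_fraction_map_dvd_fraction_map hq2).trans
    f.primPart_dvd

include hp hpm hq hpq in
lemma digits_zero (hq0 : q ≠ 0) (hqd : q.natDegree = m) (d : ℕ →₀ ℤ)
    (h0 : lcomb hm p d = 0)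
    (hd : ∀ j, m ≤ j → |d j| < |q.leadingCoeff|) : d = 0 := by
  by_contra hne
  have hf0 : (⟨⟨d⟩⟩ : Polynomial ℤ) ≠ 0 := by rwa [Ne, ofFinsupp_eq_zero, AddMonoidAlgebra.ofCoeff_eq_zero]
  obtain ⟨G, hG⟩ := q_dvd hm p hp hpm q hq hpq hq0 d h0
  have hG0 : G ≠ 0 := by rintro rfl; rw [mul_zero] at hG; exact hf0 hG
  have hnd : (⟨⟨d⟩⟩ : Polynomial ℤ).natDegree = m + G.natDegree := by
    rw [hG, natDegree_mul hq0 hG0, hqd]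
  set n := (⟨⟨d⟩⟩ : Polynomial ℤ).natDegree with hn
  have hdn : d n = q.leadingCoeff * G.leadingCoeff := by
    have h1 : (⟨⟨d⟩⟩ : Polynomial ℤ).coeff n = d n := by rw [coeff_ofFinsupp]
    rw [← h1]
    show (⟨⟨d⟩⟩ : Polynomial ℤ).leadingCoeff = _
    rw [hG, leadingCoeff_mul]
  have habs : |q.leadingCoeff| ≤ |d n| := by
    rw [hdn, abs_mul]
    have h2 : 1 ≤ |G.leadingCoeff| := Int.one_le_abs (leadingCoeff_ne_zero.mpr hG0)
    nlinarith [abs_nonneg q.leadingCoeff]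
  have h3 := hd n (by omega)
  omega

include hpq in
lemma lcomb_rel (j : ℕ) (t : ℤ) :
    lcomb hm p (Finsupp.single (j + m) (q.leadingCoeff * t)
      + ∑ i ∈ Finset.range m, Finsupp.single (j + i) (t * q.coeff i)) = 0 := by
  have hqc : ∀ i, ((q.coeff i : ℚ)) = (q.leadingCoeff : ℚ) * p.coeff i := by
    intro i
    have h1 := congrArg (fun f => Polynomial.coeff f i) hpq
    simpa [coeff_map, coeff_C_mul] using h1
  rw [map_add, map_sum]
  simp_rw [lcomb, Finsupp.linearCombination_single]
  simp_rw [← Int.cast_smul_eq_zsmul ℚ]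
  rw [wv_rec hm p j]
  push_cast
  rw [smul_neg, Finset.smul_sum]
  simp_rw [smul_smul, hqc]
  rw [← Fin.sum_univ_eq_sum_range
    (fun i => ((t : ℚ) * ((q.leadingCoeff : ℚ) * p.coeff i)) • wv m hm p (j + i)) m]
  rw [neg_add_eq_zero]
  refine Finset.sum_congr rfl fun i _ => ?_
  ring_nf

include hpq in
lemma reduce (hq0 : q ≠ 0) :
    ∀ N (b : ℕ →₀ ℤ), (∀ k, N ≤ k → b k = 0) →
    ∃ b' : ℕ →₀ ℤ, (∀ k, N ≤ k → b' k = 0) ∧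
      (∀ j, m ≤ j → 0 ≤ b' j ∧ b' j < |q.leadingCoeff|) ∧
      lcomb hm p b' = lcomb hm p b := by
  have hc0 : q.leadingCoeff ≠ 0 := leadingCoeff_ne_zero.mpr hq0
  have hcpos : 0 < |q.leadingCoeff| := abs_pos.mpr hc0
  intro N
  induction N with
  | zero =>
    intro b hb
    have hb0 : b = 0 := Finsupp.ext fun k => hb k (Nat.zero_le k)
    exact ⟨0, fun k _ => rfl, fun j _ => ⟨le_refl 0, hcpos⟩, by rw [hb0]⟩
  | succ n ih =>
    intro b hb
    by_cases hnm : n < m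
    · refine ⟨b, hb, fun j hj => ?_, rfl⟩
      have hbj : b j = 0 := hb j (by omega)
      rw [hbj]
      exact ⟨le_refl 0, hcpos⟩
    · push_neg at hnm
      set c := q.leadingCoeff with hc
      set r := b n % |c| with hr
      set s := b n / |c| with hs
      have hbn : b n = |c| * s + r := (Int.mul_ediv_add_emod (b n) |c|).symm
      have hr0 : 0 ≤ r := Int.emod_nonneg _ (ne_of_gt hcpos)
      have hrlt : r < |c| := Int.emod_lt_of_pos _ hcpos
      set t := if 0 ≤ c then s else -s with ht
      have hct : c * t = |c| * s := by
        rcases le_or_gt 0 c with h | h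
        · rw [ht, if_pos h, abs_of_nonneg h]
        · rw [ht, if_neg (not_le.mpr h), abs_of_neg h]; ring
      set σ : ℕ →₀ ℤ := ∑ i ∈ Finset.range m, Finsupp.single ((n - m) + i) (t * q.coeff i)
        with hσ
      have hσ_lt : ∀ k, n ≤ k → σ k = 0 := by
        intro k hk
        rw [hσ, Finsupp.finset_sum_apply]
        refine Finset.sum_eq_zero fun i hi => ?_
        rw [Finset.mem_range] at hi
        rw [Finsupp.single_apply, if_neg (by omega)]
      set b₃ := b - Finsupp.single n (b n) - σ with hb₃
      have hb₃0 : ∀ k, n ≤ k → b₃ k = 0 := by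
        intro k hk
        rw [hb₃]
        simp only [Finsupp.sub_apply, Finsupp.single_apply]
        rcases eq_or_ne n k with rfl | hkn
        · rw [if_pos rfl, hσ_lt n hk]; ring
        · rw [if_neg hkn, hb k (by omega), hσ_lt k hk]; ring
      obtain ⟨b₄, hb₄0, hb₄dig, hb₄⟩ := ih b₃ hb₃0
      refine ⟨b₄ + Finsupp.single n r, ?_, ?_, ?_⟩
      · intro k hk
        rw [Finsupp.add_apply, hb₄0 k (by omega), Finsupp.single_apply,
          if_neg (by omega), add_zero]
      · intro j hj
        rw [Finsupp.add_apply, Finsupp.single_apply]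
        rcases eq_or_ne n j with rfl | hnj
        · rw [hb₄0 n (le_refl n), if_pos rfl, zero_add]; exact ⟨hr0, hrlt⟩
        · rw [if_neg hnj, add_zero]; exact hb₄dig j hj
      · rw [map_add, hb₄]
        have hrel := lcomb_rel hm p q hpq (n - m) t
        rw [Nat.sub_add_cancel hnm] at hrel
        have e3 : ∀ x : ℤ, lcomb hm p (Finsupp.single n x) = x • wv m hm p n :=
          fun x => Finsupp.linearCombination_single ℤ x n
        have e1 : lcomb hm p b₃
            = lcomb hm p b - (b n) • wv m hm p n - lcomb hm p σ := by
          rw [hb₃, map_sub, map_sub, e3]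
        have e2 : (c * t) • wv m hm p n + lcomb hm p σ = 0 := by
          rw [← e3, ← map_add]; exact hrel
        have e4 : lcomb hm p σ = -((c * t) • wv m hm p n) :=
          eq_neg_of_add_eq_zero_right e2
        have hbn' : b n = c * t + r := by rw [hct]; exact hbn
        rw [e1, e4, e3, hbn', add_smul]
        abel

lemma mem_range_lcomb (v : Fin m → ℚ) (hv : v ∈ intSpan m (companion m p)) :
    ∃ b : ℕ →₀ ℤ, lcomb hm p b = v := by
  have hle : intSpan m (companion m p) ≤ (lcomb hm p).toAddMonoidHom.range := by
    rw [intSpan]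
    apply (AddSubgroup.closure_le _).mpr
    rintro x ⟨j, z, rfl⟩
    refine ⟨∑ i : Fin m, Finsupp.single (j + (i : ℕ)) (z i), ?_⟩
    show lcomb hm p _ = _
    rw [map_sum]
    have hz : (fun i => ((z i : ℚ))) = ∑ i : Fin m, ((z i : ℚ)) • (Pi.single i 1 : Fin m → ℚ) :=
      (sum_single_eq _).symm
    rw [hz]
    have hmv : ∀ w : Fin m → ℚ, (companion m p ^ j) *ᵥ w = (companion m p ^ j).mulVecLin w :=
      fun _ => rfl
    rw [hmv, map_sum]
    refine Finset.sum_congr rfl fun i _ => ?_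
    rw [lcomb, Finsupp.linearCombination_single, LinearMap.map_smul, ← hmv,
      ← wv_single hm p i, ← wv_pow, ← Int.cast_smul_eq_zsmul ℚ]
  obtain ⟨b, hb⟩ := hle hv
  exact ⟨b, hb⟩

end S4

theorem stmt4 (m : ℕ) (hm : 1 ≤ m)
    (q : Polynomial ℤ) (hqd : q.natDegree = m) (hq : q.IsPrimitive)
    (p : Polynomial ℚ) (hp : p.Monic)
    (hpq : q.map (Int.castRingHom ℚ) = Polynomial.C ((q.leadingCoeff : ℚ)) * p)
    (v : Fin m → ℚ) (hv : v ∈ intSpan m (companion m p)) :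
    ∃! b : ℕ →₀ ℤ,
      (∀ j, m ≤ j → 0 ≤ b j ∧ b j < |q.leadingCoeff|) ∧
      v = b.sum fun j bj =>
            (bj : ℚ) • ((companion m p ^ j) *ᵥ Pi.single (⟨0, hm⟩ : Fin m) (1 : ℚ)) := by
  classical
  have hq0 : q ≠ 0 := by
    intro h
    rw [h, natDegree_zero] at hqd
    omega
  have hcq : ((q.leadingCoeff : ℚ)) ≠ 0 :=
    Int.cast_ne_zero.mpr (leadingCoeff_ne_zero.mpr hq0)
  have hpm : p.natDegree = m := by
    have h1 : (q.map (Int.castRingHom ℚ)).natDegree = q.natDegree :=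
      natDegree_map_eq_of_injective (fun a b h => by exact_mod_cast (by exact h : ((a:ℚ)) = b)) q
    rw [hpq, natDegree_C_mul hcq, hqd] at h1
    exact h1
  obtain ⟨b₀, hb₀⟩ := S4.mem_range_lcomb hm p v hv
  obtain ⟨N, hN⟩ : ∃ N, ∀ k, N ≤ k → b₀ k = 0 :=
    ⟨b₀.support.sup id + 1, fun k hk => by
      by_contra h
      have h1 : k ∈ b₀.support := Finsupp.mem_support_iff.mpr h
      have h2 := Finset.le_sup (f := id) h1
      simp only [id] at h2
      omega⟩
  obtain ⟨b', hb'0, hb'dig, hb'⟩ := S4.reduce hm p q hpq hq0 N b₀ hN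
  have hvb' : S4.lcomb hm p b' = v := by rw [hb', hb₀]
  refine ⟨b', ⟨hb'dig, ?_⟩, ?_⟩
  · calc v = S4.lcomb hm p b' := hvb'.symm
      _ = b'.sum fun j bj => (bj : ℚ) • S4.wv m hm p j := S4.lcomb_eq_sum hm p b'
      _ = _ := rfl
  · rintro y ⟨hydig, hy⟩
    have hyl : S4.lcomb hm p y = v := by
      rw [S4.lcomb_eq_sum]
      exact hy.symm
    have hdz : y - b' = 0 := by
      apply S4.digits_zero hm p hp hpm q hq hpq hq0 hqd (y - b')
        (by rw [map_sub, hyl, hvb', sub_self])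
      intro j hj
      have h1 := hydig j hj
      have h2 := hb'dig j hj
      rw [Finsupp.sub_apply, abs_lt]
      set A := |q.leadingCoeff|
      omega
    exact sub_eq_zero.mp hdz
end
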